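/- arXiv:2102.00236 — 3 statements merged into one kernel-verified Lean document; each statement's English description precedes it below -/
import Mathlib

section
/- For all x ≥ 0, the Lambert W function (inverse of x ↦ x·e^x on [0,∞)) satisfies (1/2)·ln(1+x) ≤ W(x) ≤ ln(1+x). -/
/-- Bounds on the Lambert W function: if `W` is the inverse of `x ↦ x * exp x` on `[0, ∞)`,
then `(1/2) * log (1+x) ≤ W x ≤ log (1+x)` for all `x ≥ 0`. -/
theorem stmt_0 (W : ℝ → ℝ)
    (hW_nonneg : ∀ x, 0 ≤ x → 0 ≤ W x)
    (hW_inv : ∀ x, 0 ≤ x → W x * Real.exp (W x) = x) :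
    ∀ x, 0 ≤ x →
      (1/2) * Real.log (1 + x) ≤ W x ∧ W x ≤ Real.log (1 + x) := by
  intro x hx
  have hw := hW_nonneg x hx
  have hwe := hW_inv x hx
  set w := W x with hwdef
  have hpos := Real.exp_pos w
  have hew : Real.exp w ≤ 1 + x := by
    have h1 : 1 - w ≤ Real.exp (-w) := by
      have := Real.add_one_le_exp (-w); linarith
    have h2 : (1 - w) * Real.exp w ≤ 1 := by
      have := mul_le_mul_of_nonneg_right h1 hpos.le
      rwa [Real.exp_neg, inv_mul_cancel₀ (ne_of_gt hpos)] at this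
    nlinarith
  have hlow : 1 + x ≤ Real.exp (2 * w) := by
    have h1 : 1 + w ≤ Real.exp w := by
      have := Real.add_one_le_exp w; linarith
    have h2 : Real.exp (2 * w) = Real.exp w * Real.exp w := by
      rw [two_mul, Real.exp_add]
    nlinarith
  constructor
  · have hl : Real.log (1 + x) ≤ 2 * w := by
      calc Real.log (1 + x) ≤ Real.log (Real.exp (2 * w)) :=
            Real.log_le_log (by linarith) hlow
        _ = 2 * w := Real.log_exp _
    linarith
  · calc w = Real.log (Real.exp w) := (Real.log_exp w).symm
      _ ≤ Real.log (1 + x) := Real.log_le_log hpos hew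
end

section
/- Let η₁ ≥ η₂ ≥ ⋯ ≥ η_T ≥ 0 and q₁,…,q_T ≥ 0 be real numbers. Then η_T·q_T ≤ (1/T)·∑_{t=1}^T η_t·q_t + ∑_{k=1}^{T-1} (1/(k(k+1)))·∑_{t=T-k}^T η_t·(q_t − q_{T−k}). -/
open scoped BigOperators

/-- Last-iterate vs average comparison lemma. -/
theorem stmt_5 (T : ℕ) (hT : 1 ≤ T) (η q : ℕ → ℝ)
    (hη_mono : ∀ s t, 1 ≤ s → s ≤ t → t ≤ T → η t ≤ η s)
    (hη_nonneg : ∀ t ∈ Finset.Icc 1 T, 0 ≤ η t)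
    (hq_nonneg : ∀ t ∈ Finset.Icc 1 T, 0 ≤ q t) :
    η T * q T ≤ (1 / (T : ℝ)) * ∑ t ∈ Finset.Icc 1 T, η t * q t
      + ∑ k ∈ Finset.Icc 1 (T - 1),
          (1 / ((k : ℝ) * ((k : ℝ) + 1))) *
            ∑ t ∈ Finset.Icc (T - k) T, η t * (q t - q (T - k)) := by
  set S : ℕ → ℝ := fun k => (1/((k:ℝ)+1)) * ∑ t ∈ Finset.Icc (T-k) T, η t * q t with hS
  have split : ∀ (f : ℕ → ℝ) (a : ℕ), a ≤ T →
      ∑ t ∈ Finset.Icc a T, f t = f a + ∑ t ∈ Finset.Icc (a+1) T, f t := by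
    intro f a ha
    rw [Finset.Icc_eq_cons_Ioc ha, Finset.sum_cons, Finset.Icc_add_one_left_eq_Ioc]
  have key : ∀ k, 1 ≤ k → k ≤ T - 1 →
      S (k-1) ≤ S k + (1/((k:ℝ)*((k:ℝ)+1))) *
        ∑ t ∈ Finset.Icc (T-k) T, η t * (q t - q (T-k)) := by
    intro k hk1 hkT
    set a := T - k with ha
    have ha1 : 1 ≤ a := by omega
    have haT : a ≤ T := by omega
    have hidx : T - (k-1) = a + 1 := by omega
    set A := ∑ t ∈ Finset.Icc (a+1) T, η t * q t with hA
    set B := ∑ t ∈ Finset.Icc (a+1) T, η t with hB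
    have hcard : (Finset.Icc (a+1) T).card = k := by
      rw [Nat.card_Icc]; omega
    have hBle : B ≤ (k:ℝ) * η a := by
      have h1 : B ≤ ∑ _t ∈ Finset.Icc (a+1) T, η a := by
        apply Finset.sum_le_sum
        intro t ht
        simp only [Finset.mem_Icc] at ht
        exact hη_mono a t ha1 (by omega) ht.2
      rw [Finset.sum_const, hcard, nsmul_eq_mul] at h1
      exact h1
    have hq : 0 ≤ q a := hq_nonneg a (Finset.mem_Icc.mpr ⟨ha1, haT⟩)
    have hsub : ∑ t ∈ Finset.Icc (a+1) T, η t * (q t - q a) = A - q a * B := by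
      rw [hA, hB, Finset.mul_sum, ← Finset.sum_sub_distrib]
      apply Finset.sum_congr rfl
      intro t _; ring
    have hE : ∑ t ∈ Finset.Icc a T, η t * (q t - q a)
        = η a * (q a - q a) + (A - q a * B) := by
      rw [split (fun t => η t * (q t - q a)) a haT, hsub]
    have hSk : S k = (1/((k:ℝ)+1)) * (η a * q a + A) := by
      rw [hS]; simp only [← ha]
      rw [split (fun t => η t * q t) a haT]
    have hSk1 : S (k-1) = (1/(k:ℝ)) * A := by
      rw [hS]; simp only [hidx]
      have hc : ((k-1:ℕ):ℝ) + 1 = (k:ℝ) := by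
        have : (k - 1) + 1 = k := by omega
        exact_mod_cast congrArg (Nat.cast (R := ℝ)) this
      rw [hc]
    have hk0 : (0:ℝ) < k := by exact_mod_cast hk1
    have hk1' : (0:ℝ) < (k:ℝ) + 1 := by linarith
    rw [hSk, hSk1, hE]
    have expand : (1/((k:ℝ)+1)) * (η a * q a + A)
        + (1/((k:ℝ)*((k:ℝ)+1))) * (η a * (q a - q a) + (A - q a * B))
        - (1/(k:ℝ)) * A
        = q a * ((k:ℝ) * η a - B) / ((k:ℝ)*((k:ℝ)+1)) := by
      field_simp
      ring
    have hnn : 0 ≤ q a * ((k:ℝ) * η a - B) / ((k:ℝ)*((k:ℝ)+1)) :=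
      div_nonneg (mul_nonneg hq (by linarith)) (le_of_lt (mul_pos hk0 hk1'))
    linarith
  have main : ∀ m, m ≤ T - 1 → S 0 ≤ S m + ∑ k ∈ Finset.Icc 1 m,
      (1/((k:ℝ)*((k:ℝ)+1))) * ∑ t ∈ Finset.Icc (T-k) T, η t * (q t - q (T-k)) := by
    intro m hm
    induction m with
    | zero => simp
    | succ n ih =>
      have h1 := ih (by omega)
      have h2 := key (n+1) (by omega) hm
      simp only [Nat.add_sub_cancel] at h2
      rw [Finset.sum_Icc_succ_top (by omega)]
      linarith
  have hmain := main (T-1) le_rfl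
  have hS0 : S 0 = η T * q T := by
    rw [hS]; simp
  have hST : S (T-1) = (1 / (T : ℝ)) * ∑ t ∈ Finset.Icc 1 T, η t * q t := by
    rw [hS]
    have h1 : T - (T-1) = 1 := by omega
    have h2 : ((T-1:ℕ):ℝ) + 1 = (T:ℝ) := by
      have : (T - 1) + 1 = T := by omega
      exact_mod_cast congrArg (Nat.cast (R := ℝ)) this
    simp only [h1, h2]
  rw [← hS0, ← hST]
  exact hmain
end

section
/- Let ψ(x,S,Q) = sup_{θ∈ℝ} (θx − ψ*(θ,S,Q)) be the Fenchel conjugate in the first argument of ψ*(θ,S,Q) = exp(θ²/(4S²) − Q) for |θ|≤S², exp(|θ|/2 − S²/4 − Q) for |θ|>S². Then for S ≥ 1, Q ≥ 0 and every x ∈ ℝ, ψ(x,S,Q) < S·|x|·(2·ln(1+2x²) + 3Q + 3S). -/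
/-- Linearithmic upper bound on `ψ(x,S,Q)`, the Fenchel conjugate in `θ` of
`ψ*(θ,S,Q)`. -/
theorem stmt_13 (S Q : ℝ) (hS : 1 ≤ S) (hQ : 0 ≤ Q)
    (ψs : ℝ → ℝ)
    (hψs : ∀ θ, ψs θ = if |θ| ≤ S ^ 2 then Real.exp (θ ^ 2 / (4 * S ^ 2) - Q)
        else Real.exp (|θ| / 2 - S ^ 2 / 4 - Q)) :
    ∀ x : ℝ,
      sSup (Set.range fun θ => θ * x - ψs θ)
        < S * |x| * (2 * Real.log (1 + 2 * x ^ 2) + 3 * Q + 3 * S) := by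
  have hS0 : (0:ℝ) < S := lt_of_lt_of_le one_pos hS
  have hkey : ∀ θ, Real.exp (|θ| / 2 - S ^ 2 / 4 - Q) ≤ ψs θ := by
    intro θ
    rw [hψs θ]
    split_ifs with h
    · apply Real.exp_le_exp.2
      have h2 : |θ| / 2 - S ^ 2 / 4 ≤ θ ^ 2 / (4 * S ^ 2) := by
        rw [le_div_iff₀ (by positivity)]
        nlinarith [sq_abs θ, sq_nonneg (|θ| - S ^ 2)]
      linarith
    · exact le_refl _
  intro x
  rcases eq_or_ne x 0 with rfl | hx
  · have hb : sSup (Set.range fun θ => θ * (0:ℝ) - ψs θ)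
        ≤ -Real.exp (-(S ^ 2 / 4) - Q) := by
      apply csSup_le (Set.range_nonempty _)
      rintro y ⟨θ, rfl⟩
      have h1 := hkey θ
      have h2 : Real.exp (-(S ^ 2 / 4) - Q) ≤ Real.exp (|θ| / 2 - S ^ 2 / 4 - Q) := by
        apply Real.exp_le_exp.2
        have := abs_nonneg θ
        linarith
      simp only [mul_zero, zero_sub]
      linarith
    have : (0:ℝ) < Real.exp (-(S ^ 2 / 4) - Q) := Real.exp_pos _
    simpa using lt_of_le_of_lt hb (by linarith)
  · set a : ℝ := |x| with ha_def
    have ha : 0 < a := abs_pos.2 hx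
    set B : ℝ := 2 * a * (S ^ 2 / 4 + Q + Real.log (2 * a) - 1) with hB_def
    have hb : sSup (Set.range fun θ => θ * x - ψs θ) ≤ B := by
      apply csSup_le (Set.range_nonempty _)
      rintro y ⟨θ, rfl⟩
      have h1 := hkey θ
      have h2 : θ * x ≤ |θ| * a := by
        calc θ * x ≤ |θ * x| := le_abs_self _
          _ = |θ| * a := abs_mul θ x
      have e1 : Real.exp (|θ| / 2 - S ^ 2 / 4 - Q)
          = 2 * a * Real.exp (|θ| / 2 - S ^ 2 / 4 - Q - Real.log (2 * a)) := by
        conv_lhs => rw [show |θ| / 2 - S ^ 2 / 4 - Q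
          = Real.log (2 * a) + (|θ| / 2 - S ^ 2 / 4 - Q - Real.log (2 * a)) by ring]
        rw [Real.exp_add, Real.exp_log (by positivity)]
      have e2 : (|θ| / 2 - S ^ 2 / 4 - Q - Real.log (2 * a)) + 1
          ≤ Real.exp (|θ| / 2 - S ^ 2 / 4 - Q - Real.log (2 * a)) :=
        Real.add_one_le_exp _
      have e3 := mul_le_mul_of_nonneg_left e2 (by positivity : (0:ℝ) ≤ 2 * a)
      have h3 : |θ| * a - B ≤ Real.exp (|θ| / 2 - S ^ 2 / 4 - Q) := by
        rw [e1, hB_def]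
        nlinarith [e3]
      show θ * x - ψs θ ≤ B
      linarith
    refine lt_of_le_of_lt hb ?_
    have h2a : 2 * a ≤ 1 + 2 * x ^ 2 := by
      nlinarith [sq_abs x, sq_nonneg (a - 1)]
    have hlog : Real.log (2 * a) ≤ Real.log (1 + 2 * x ^ 2) :=
      Real.log_le_log (by positivity) h2a
    have hlog0 : 0 ≤ Real.log (1 + 2 * x ^ 2) :=
      Real.log_nonneg (by nlinarith [sq_nonneg x])
    rw [hB_def]
    nlinarith [mul_le_mul_of_nonneg_left hlog (by positivity : (0:ℝ) ≤ 2 * a),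
      mul_nonneg (mul_nonneg (sub_nonneg.2 hS) ha.le) hlog0,
      mul_nonneg (mul_nonneg (sub_nonneg.2 hS) ha.le) hQ,
      mul_pos ha (mul_pos hS0 hS0), sq_nonneg S, ha.le]
end
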